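/- Let V ⊂ ℝⁿ be a finite set and k ≥ 1 an integer. Let SC^k = {0, e₁, ..., e_k} ⊂ ℝ^k be the k-semicross, where e_i is the i-th standard basis vector. Then every subset W of the Cartesian power V^k ⊆ ℝ^{nk} (with the Euclidean metric) containing no isometric copy of SC^k satisfies |W| ≤ k · |V|^{k−1} · α(V). -/

import Mathlib

/-- The point of `ℝ^{n·k}` corresponding to a `k`-tuple of points of `ℝⁿ`
(coordinatewise concatenation). -/
noncomputable def powPoint {n k : ℕ} (v : Fin k → EuclideanSpace ℝ (Fin n)) :
    EuclideanSpace ℝ (Fin (n * k)) :=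
  WithLp.toLp 2 fun j => v (finProdFinEquiv.symm j).2 (finProdFinEquiv.symm j).1

/-- `M'` is an isometric copy of `M` in `ℝ^N` (Euclidean metric). -/
def IsIsomCopy {d N : ℕ} (M : Set (EuclideanSpace ℝ (Fin d)))
    (M' : Set (EuclideanSpace ℝ (Fin N))) : Prop :=
  ∃ f : EuclideanSpace ℝ (Fin d) → EuclideanSpace ℝ (Fin N),
    (∀ x ∈ M, ∀ y ∈ M, dist (f x) (f y) = dist x y) ∧ M' = f '' M

/-- For a finite `V ⊂ ℝⁿ`, `alphaE V` is the largest size of a subset of `V` no two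
points of which are at Euclidean distance `1`. -/
noncomputable def alphaE {n : ℕ} (V : Finset (EuclideanSpace ℝ (Fin n))) : ℕ :=
  sSup {m | ∃ W ⊆ V, (∀ x ∈ W, ∀ y ∈ W, dist x y ≠ 1) ∧ W.card = m}

/-- The `k`-semicross `SC^k = {0, e₁, …, e_k} ⊂ ℝ^k`. -/
noncomputable def semicross (k : ℕ) : Set (EuclideanSpace ℝ (Fin k)) :=
  insert 0 (Set.range fun i : Fin k => EuclideanSpace.single i (1 : ℝ))

lemma dist_powPoint {n k : ℕ} (v v' : Fin k → EuclideanSpace ℝ (Fin n)) :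
    dist (powPoint v) (powPoint v') = Real.sqrt (∑ i, dist (v i) (v' i) ^ 2) := by
  rw [EuclideanSpace.dist_eq]
  congr 1
  rw [← Equiv.sum_comp finProdFinEquiv (fun j => dist (powPoint v j) (powPoint v' j) ^ 2)]
  rw [Fintype.sum_prod_type]
  rw [Finset.sum_comm]
  refine Finset.sum_congr rfl fun i _ => ?_
  rw [EuclideanSpace.dist_eq, Real.sq_sqrt (by positivity)]
  refine Finset.sum_congr rfl fun a _ => ?_
  have h2 : finProdFinEquiv.symm (finProdFinEquiv (a, i)) = (a, i) :=
    Equiv.symm_apply_apply _ _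
  simp only [powPoint]; rw [h2]

/-- Any subset `W` of the Cartesian power `V^k ⊆ ℝ^{nk}` containing no isometric copy
of the `k`-semicross satisfies `|W| ≤ k · |V|^{k−1} · α(V)`. -/
theorem cutting_corners_semicross {n k : ℕ} (hk : 1 ≤ k)
    (V : Finset (EuclideanSpace ℝ (Fin n)))
    (W : Finset (EuclideanSpace ℝ (Fin (n * k))))
    (hW : ∀ w ∈ W, ∃ v : Fin k → EuclideanSpace ℝ (Fin n),
      (∀ i, v i ∈ V) ∧ w = powPoint v)
    (hno : ¬ ∃ M' ⊆ (W : Set (EuclideanSpace ℝ (Fin (n * k)))),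
      IsIsomCopy (semicross k) M') :
    W.card ≤ k * V.card ^ (k - 1) * alphaE V := by
  classical
  have hW' : ∀ w : EuclideanSpace ℝ (Fin (n * k)),
      ∃ v : Fin k → EuclideanSpace ℝ (Fin n),
        w ∈ W → (∀ i, v i ∈ V) ∧ w = powPoint v := by
    intro w
    by_cases h : w ∈ W
    · obtain ⟨v, h1, h2⟩ := hW w h
      exact ⟨v, fun _ => ⟨h1, h2⟩⟩
    · exact ⟨fun _ => 0, fun h' => absurd h' h⟩
  choose v hv using hW'
  -- each w in W has a blocked direction
  have hkey : ∀ w, ∃ i : Fin k, w ∈ W →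
      ∀ u ∈ V, dist (v w i) u = 1 → powPoint (Function.update (v w) i u) ∉ W := by
    intro w
    by_cases hw : w ∈ W
    swap
    · exact ⟨⟨0, hk⟩, fun h => absurd h hw⟩
    by_contra hcon
    push_neg at hcon
    choose u huV hud huW using fun i => (hcon i).2
    apply hno
    set d : Fin k → EuclideanSpace ℝ (Fin n) := fun j => u j - v w j with hd
    set f : EuclideanSpace ℝ (Fin k) → EuclideanSpace ℝ (Fin (n * k)) :=
      fun x => powPoint (fun j => v w j + x j • d j) with hf
    have hfiso : ∀ x y : EuclideanSpace ℝ (Fin k), dist (f x) (f y) = dist x y := by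
      intro x y
      rw [hf]
      dsimp only
      rw [dist_powPoint]
      have hterm : ∀ j : Fin k,
          dist (v w j + x j • d j) (v w j + y j • d j) = dist (x j) (y j) := by
        intro j
        rw [dist_eq_norm, add_sub_add_left_eq_sub, ← sub_smul, norm_smul]
        have hdj : ‖d j‖ = 1 := by
          rw [hd]
          dsimp only
          rw [← dist_eq_norm, dist_comm]
          exact hud j
        rw [hdj, mul_one, Real.dist_eq, Real.norm_eq_abs]
      simp_rw [hterm]
      exact (EuclideanSpace.dist_eq x y).symm
    refine ⟨f '' semicross k, ?_, f, fun x _ y _ => hfiso x y, rfl⟩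
    rintro z ⟨x, hx, rfl⟩
    rcases hx with rfl | ⟨i, rfl⟩
    · have : f 0 = w := by
        rw [hf]
        dsimp only
        have h0 : (fun j => v w j + (0 : EuclideanSpace ℝ (Fin k)) j • d j) = v w := by
          funext j
          simp
        rw [h0]
        exact ((hv w hw).2).symm
      rw [this]
      exact hw
    · have heq : (fun j => v w j + (EuclideanSpace.single i (1 : ℝ)) j • d j)
          = Function.update (v w) i (u i) := by
        funext j
        by_cases hji : j = i
        · subst hji
          simp [EuclideanSpace.single_apply, hd]
        · simp [EuclideanSpace.single_apply, hji, Function.update_of_ne hji]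
      have : f (EuclideanSpace.single i (1 : ℝ)) = powPoint (Function.update (v w) i (u i)) := by
        rw [hf]
        dsimp only
        rw [heq]
      rw [this]
      exact huW i
  choose ind hind using hkey
  set key : EuclideanSpace ℝ (Fin (n * k)) → Fin k × (Fin k → EuclideanSpace ℝ (Fin n)) :=
    fun w => (ind w, Function.update (v w) (ind w) 0) with hkeydef
  have hbdd : BddAbove {m | ∃ U ⊆ V, (∀ x ∈ U, ∀ y ∈ U, dist x y ≠ 1) ∧ U.card = m} := by
    refine ⟨V.card, ?_⟩
    rintro m ⟨U, hU, _, rfl⟩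
    exact Finset.card_le_card hU
  have hfiber : ∀ b ∈ W.image key, (W.filter fun w => key w = b).card ≤ alphaE V := by
    intro b _
    set S := W.filter fun w => key w = b with hS
    have hmem : ∀ w ∈ S, w ∈ W ∧ ind w = b.1 ∧ Function.update (v w) b.1 0 = b.2 := by
      intro w hw
      rw [hS, Finset.mem_filter] at hw
      obtain ⟨hw1, hw2⟩ := hw
      have h1 : ind w = b.1 := congrArg Prod.fst hw2
      refine ⟨hw1, h1, ?_⟩
      rw [← h1]
      exact congrArg Prod.snd hw2
    have hoff : ∀ w ∈ S, ∀ w' ∈ S, ∀ j, j ≠ b.1 → v w j = v w' j := by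
      intro w hw w' hw' j hj
      have e1 := (hmem w hw).2.2
      have e2 := (hmem w' hw').2.2
      calc v w j = Function.update (v w) b.1 0 j := (Function.update_of_ne hj _ _).symm
        _ = Function.update (v w') b.1 0 j := by rw [e1, e2]
        _ = v w' j := Function.update_of_ne hj _ _
    have hinj : Set.InjOn (fun w => v w b.1) S := by
      intro w hw w' hw' hg
      have hwS : w ∈ S := Finset.mem_coe.mp hw
      have hw'S : w' ∈ S := Finset.mem_coe.mp hw'
      have : v w = v w' := by
        funext j
        by_cases hj : j = b.1
        · subst hj; exact hg
        · exact hoff w hwS w' hw'S j hj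
      calc w = powPoint (v w) := (hv w (hmem w hwS).1).2
        _ = powPoint (v w') := by rw [this]
        _ = w' := ((hv w' (hmem w' hw'S).1).2).symm
    rw [← Finset.card_image_of_injOn hinj]
    refine le_csSup hbdd ⟨S.image fun w => v w b.1, ?_, ?_, rfl⟩
    · intro x hx
      obtain ⟨w, hw, rfl⟩ := Finset.mem_image.mp hx
      exact (hv w (hmem w hw).1).1 b.1
    · intro x hx y hy hdist
      obtain ⟨w, hw, rfl⟩ := Finset.mem_image.mp hx
      obtain ⟨w', hw', rfl⟩ := Finset.mem_image.mp hy
      have hw'W := (hmem w' hw').1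
      have hiw' := (hmem w' hw').2.1
      have hnot := hind w' hw'W (v w b.1) ((hv w (hmem w hw).1).1 b.1)
      rw [hiw'] at hnot
      have hd1 : dist (v w' b.1) (v w b.1) = 1 := by rw [dist_comm]; exact hdist
      have hupd : Function.update (v w') b.1 (v w b.1) = v w := by
        funext j
        by_cases hj : j = b.1
        · subst hj; simp
        · rw [Function.update_of_ne hj]
          exact (hoff w hw w' hw' j hj).symm
      have := hnot hd1
      rw [hupd] at this
      exact this ((hv w (hmem w hw).1).2 ▸ (hmem w hw).1)
  have main := Finset.card_le_mul_card_image (f := key) W (alphaE V) hfiber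
  have himg : (W.image key).card ≤ k * V.card ^ (k - 1) := by
    have hsub : W.image key ⊆ Finset.univ.biUnion fun i : Fin k =>
        ({i} : Finset (Fin k)) ×ˢ Fintype.piFinset fun j =>
          if j = i then ({0} : Finset (EuclideanSpace ℝ (Fin n))) else V := by
      intro b hb
      obtain ⟨w, hw, rfl⟩ := Finset.mem_image.mp hb
      refine Finset.mem_biUnion.mpr ⟨ind w, Finset.mem_univ _, ?_⟩
      rw [Finset.mem_product]
      constructor
      · simp [hkeydef]
      · rw [Fintype.mem_piFinset]
        intro j
        by_cases hj : j = ind w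
        · subst hj; simp [hkeydef]
        · simp only [hkeydef, if_neg hj]
          rw [Function.update_of_ne hj]
          exact (hv w hw).1 j
    refine le_trans (Finset.card_le_card hsub) (le_trans Finset.card_biUnion_le ?_)
    have hone : ∀ i : Fin k,
        (({i} : Finset (Fin k)) ×ˢ Fintype.piFinset fun j =>
          if j = i then ({0} : Finset (EuclideanSpace ℝ (Fin n))) else V).card
        = V.card ^ (k - 1) := by
      intro i
      rw [Finset.card_product, Finset.card_singleton, one_mul, Fintype.card_piFinset]
      have : ∀ j : Fin k, (if j = i then ({0} : Finset (EuclideanSpace ℝ (Fin n))) else V).card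
          = if j = i then 1 else V.card := by
        intro j; split <;> simp
      simp_rw [this]
      rw [← Finset.mul_prod_erase Finset.univ _ (Finset.mem_univ i), if_pos rfl, one_mul]
      rw [Finset.prod_congr rfl fun j hj => if_neg (Finset.ne_of_mem_erase hj)]
      rw [Finset.prod_const, Finset.card_erase_of_mem (Finset.mem_univ i)]
      simp
    calc (∑ i : Fin k, (({i} : Finset (Fin k)) ×ˢ Fintype.piFinset fun j =>
          if j = i then ({0} : Finset (EuclideanSpace ℝ (Fin n))) else V).card)
        = ∑ _i : Fin k, V.card ^ (k - 1) := Finset.sum_congr rfl fun i _ => hone i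
      _ = k * V.card ^ (k - 1) := by simp [Finset.sum_const, mul_comm]
      _ ≤ k * V.card ^ (k - 1) := le_rfl
  calc W.card ≤ alphaE V * (W.image key).card := main
    _ ≤ alphaE V * (k * V.card ^ (k - 1)) := Nat.mul_le_mul_left _ himg
    _ = k * V.card ^ (k - 1) * alphaE V := by ring
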